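/- The uplink-downlink power iteration map p ↦ Γ t(p), where t_i(p) = min over unit-norm ŵ of (ŵ^H Q_i(p) ŵ)/(ŵ^H R_i ŵ) and Q_i(p) = ∑_{t≠i} p_t R_t + σ_i² I, is monotone: if p ⪯ p' componentwise (with all entries nonnegative), then Γ t(p) ⪯ Γ t(p') componentwise. -/

import Mathlib

open Matrix ComplexOrder BigOperators

/-- The dual-uplink interference map `t_i(p)`: the minimum (infimum) over unit-norm
vectors `v` of the Rayleigh quotient `(vᴴ Q_i(p) v) / (vᴴ R_i v)`, where
`Q_i(p) = ∑_{t ≠ i} p_t R_t + σ_i² I`. -/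
noncomputable def tmap {M U : ℕ} (R : Fin U → Matrix (Fin M) (Fin M) ℂ)
    (σsq : Fin U → ℝ) (i : Fin U) (p : Fin U → ℝ) : ℝ :=
  sInf {x : ℝ | ∃ v : Fin M → ℂ, star v ⬝ᵥ v = 1 ∧
    x = (star v ⬝ᵥ ((∑ t ∈ Finset.univ.erase i, (p t : ℂ) • R t)
          + (σsq i : ℂ) • (1 : Matrix (Fin M) (Fin M) ℂ)).mulVec v).re
        / (star v ⬝ᵥ (R i).mulVec v).re}

lemma sum_mulVec' {M U : ℕ} (A : Fin U → Matrix (Fin M) (Fin M) ℂ) (c : Fin U → ℂ)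
    (v : Fin M → ℂ) (s : Finset (Fin U)) :
    (∑ t ∈ s, c t • A t).mulVec v = ∑ t ∈ s, c t • ((A t).mulVec v) := by
  induction s using Finset.induction with
  | empty => simp [Matrix.mulVec]
  | insert _ _ h ih =>
    simp [Finset.sum_insert h, Matrix.add_mulVec, Matrix.smul_mulVec, ih]

lemma dot_sum' {M U : ℕ} (v : Fin M → ℂ) (w : Fin U → Fin M → ℂ) (s : Finset (Fin U)) :
    star v ⬝ᵥ (∑ t ∈ s, w t) = ∑ t ∈ s, star v ⬝ᵥ w t := by
  induction s using Finset.induction with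
  | empty => simp
  | insert _ _ h ih => simp [Finset.sum_insert h, dotProduct_add, ih]

lemma re_quad_eq {M U : ℕ} (R : Fin U → Matrix (Fin M) (Fin M) ℂ) (s : ℝ) (i : Fin U)
    (p : Fin U → ℝ) (v : Fin M → ℂ) :
    (star v ⬝ᵥ ((∑ t ∈ Finset.univ.erase i, (p t : ℂ) • R t)
          + (s : ℂ) • (1 : Matrix (Fin M) (Fin M) ℂ)).mulVec v).re
    = (∑ t ∈ Finset.univ.erase i, p t * (star v ⬝ᵥ (R t).mulVec v).re)
      + s * (star v ⬝ᵥ v).re := by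
  rw [Matrix.add_mulVec, dotProduct_add, Complex.add_re, sum_mulVec', dot_sum']
  congr 1
  · rw [Complex.re_sum]
    refine Finset.sum_congr rfl (fun t _ => ?_)
    rw [dotProduct_smul, smul_eq_mul, Complex.re_ofReal_mul]
  · rw [Matrix.smul_mulVec, Matrix.one_mulVec, dotProduct_smul, smul_eq_mul,
      Complex.re_ofReal_mul]

theorem stmt_18 (M U : ℕ) (R : Fin U → Matrix (Fin M) (Fin M) ℂ)
    (hR : ∀ i, (R i).PosSemidef) (hR0 : ∀ i, R i ≠ 0)
    (σsq : Fin U → ℝ) (hσ : ∀ i, 0 < σsq i)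
    (γ : Fin U → ℝ) (hγ : ∀ i, 0 < γ i)
    (p p' : Fin U → ℝ) (hp : ∀ i, 0 ≤ p i) (hpp' : ∀ i, p i ≤ p' i) :
    ∀ i, γ i * tmap R σsq i p ≤ γ i * tmap R σsq i p' := by
  intro i
  apply mul_le_mul_of_nonneg_left _ (hγ i).le
  let S : (Fin U → ℝ) → Set ℝ := fun q => {x : ℝ | ∃ v : Fin M → ℂ, star v ⬝ᵥ v = 1 ∧
    x = (star v ⬝ᵥ ((∑ t ∈ Finset.univ.erase i, (q t : ℂ) • R t)
          + (σsq i : ℂ) • (1 : Matrix (Fin M) (Fin M) ℂ)).mulVec v).re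
        / (star v ⬝ᵥ (R i).mulVec v).re}
  show sInf (S p) ≤ sInf (S p')
  -- every element of S q is nonneg, for q ≥ 0
  have hbdd : ∀ q : Fin U → ℝ, (∀ t, 0 ≤ q t) → ∀ x ∈ S q, (0:ℝ) ≤ x := by
    intro q hq x hx
    obtain ⟨v, hv, rfl⟩ := hx
    apply div_nonneg
    · rw [re_quad_eq]
      have h1 : (0:ℝ) ≤ ∑ t ∈ Finset.univ.erase i, q t * (star v ⬝ᵥ (R t).mulVec v).re :=
        Finset.sum_nonneg (fun t _ =>
          mul_nonneg (hq t) ((hR t).re_dotProduct_nonneg v))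
      have h2 : 0 ≤ σsq i * (star v ⬝ᵥ v).re := by
        rw [hv]; simp [(hσ i).le]
      linarith
    · exact (hR i).re_dotProduct_nonneg v
  rcases Set.eq_empty_or_nonempty (S p') with he | hne
  · have hep : S p = ∅ := by
      rw [Set.eq_empty_iff_forall_notMem] at he ⊢
      intro x hx
      obtain ⟨v, hv, _⟩ := hx
      exact he ((star v ⬝ᵥ ((∑ t ∈ Finset.univ.erase i, ((p' t : ℂ)) • R t)
          + (σsq i : ℂ) • (1 : Matrix (Fin M) (Fin M) ℂ)).mulVec v).re
        / (star v ⬝ᵥ (R i).mulVec v).re) ⟨v, hv, rfl⟩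
    rw [he, hep]
  · apply le_csInf hne
    intro x hx
    obtain ⟨v, hv, rfl⟩ := hx
    have hmem : ((star v ⬝ᵥ ((∑ t ∈ Finset.univ.erase i, ((p t : ℂ)) • R t)
          + (σsq i : ℂ) • (1 : Matrix (Fin M) (Fin M) ℂ)).mulVec v).re
        / (star v ⬝ᵥ (R i).mulVec v).re) ∈ S p := ⟨v, hv, rfl⟩
    have hle := csInf_le ⟨0, fun y hy => hbdd p hp y hy⟩ hmem
    refine hle.trans ?_
    rw [re_quad_eq, re_quad_eq]
    have hdnn : 0 ≤ (star v ⬝ᵥ (R i).mulVec v).re := (hR i).re_dotProduct_nonneg v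
    rcases hdnn.eq_or_lt with hd | hd
    · rw [← hd]; simp
    · gcongr with t ht
      · exact (hR t).re_dotProduct_nonneg v
      · exact hpp' t
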